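/- For any natural numbers r, x, y, the determinant of the n×n matrix with (i,j)-entry C(r·i+x, j+y) equals r^(n(n-1)/2) · ∏_{i=0}^{n-1} C(r·i+x, y) / C(i+y, y). -/

import Mathlib

open Finset Polynomial Matrix

lemma prod_range_cast_sub (i : ℕ) :
    ∏ k ∈ Finset.range i, ((i : ℚ) - (k : ℚ)) = (i.factorial : ℚ) := by
  have : ∀ k ∈ Finset.range i, ((i : ℚ) - (k : ℚ)) = ((i - k : ℕ) : ℚ) := by
    intro k hk
    rw [Nat.cast_sub (le_of_lt (Finset.mem_range.mp hk))]
  rw [Finset.prod_congr rfl this, ← Nat.cast_prod, ← Nat.descFactorial_eq_prod_range,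
    Nat.descFactorial_self]

lemma det_choose_base (n r d : ℕ) :
    Matrix.det (Matrix.of fun i j : Fin n => ((d + r * (i : ℕ)).choose (j : ℕ) : ℚ))
      = (r : ℚ) ^ n.choose 2 := by
  have hentry : ∀ i j : Fin n,
      ((d + r * (i : ℕ)).choose (j : ℕ) : ℚ) =
        ((j : ℕ).factorial : ℚ)⁻¹ *
          (descPochhammer ℚ (j : ℕ)).eval ((d + r * (i : ℕ) : ℕ) : ℚ) := by
    intro i j
    rw [descPochhammer_eval_eq_descFactorial, Nat.descFactorial_eq_factorial_mul_choose]
    push_cast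
    rw [inv_mul_cancel_left₀]
    exact_mod_cast Nat.factorial_ne_zero _
  have h1 : Matrix.det (Matrix.of fun i j : Fin n => ((d + r * (i : ℕ)).choose (j : ℕ) : ℚ))
      = (∏ j : Fin n, ((j : ℕ).factorial : ℚ)⁻¹) *
        Matrix.det (Matrix.of fun i j : Fin n =>
          (descPochhammer ℚ (j : ℕ)).eval ((d + r * (i : ℕ) : ℕ) : ℚ)) := by
    rw [← Matrix.det_mul_row]
    congr 1
    ext i j
    exact hentry i j
  -- det of descPochhammer eval matrix = vandermonde det
  have h2 : Matrix.det (Matrix.of fun i j : Fin n =>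
        (descPochhammer ℚ (j : ℕ)).eval ((d + r * (i : ℕ) : ℕ) : ℚ))
      = (Matrix.vandermonde (fun i : Fin n => ((d + r * (i : ℕ) : ℕ) : ℚ))).det := by
    rw [Matrix.det_eval_matrixOfPolynomials_eq_det_vandermonde
      (fun i : Fin n => ((d + r * (i : ℕ) : ℕ) : ℚ))
      (fun j : Fin n => descPochhammer ℚ (j : ℕ))
      (fun i => descPochhammer_natDegree (R := ℚ) _)
      (fun i => monic_descPochhammer ℚ _)]
  -- vandermonde det via product polynomials
  set q : Fin n → ℚ[X] := fun j => ∏ k ∈ Finset.range (j : ℕ), (X - C ((d + r * k : ℕ) : ℚ))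
    with hq
  have hqmonic : ∀ j : Fin n, (q j).Monic := fun j =>
    monic_prod_of_monic _ _ (fun k _ => monic_X_sub_C _)
  have hqdeg : ∀ j : Fin n, (q j).natDegree = (j : ℕ) := by
    intro j
    rw [hq]
    simp only
    rw [natDegree_prod_of_monic _ _ (fun k _ => monic_X_sub_C _)]
    simp only [natDegree_X_sub_C, Finset.sum_const, Finset.card_range, smul_eq_mul, mul_one]
  have h3 : (Matrix.vandermonde (fun i : Fin n => ((d + r * (i : ℕ) : ℕ) : ℚ))).det
      = Matrix.det (Matrix.of fun i j : Fin n =>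
          (q j).eval ((d + r * (i : ℕ) : ℕ) : ℚ)) :=
    Matrix.det_eval_matrixOfPolynomials_eq_det_vandermonde _ _ hqdeg hqmonic
  have heval : ∀ i j : Fin n, (q j).eval ((d + r * (i : ℕ) : ℕ) : ℚ)
      = ∏ k ∈ Finset.range (j : ℕ), ((r : ℚ) * ((i : ℚ) - (k : ℚ))) := by
    intro i j
    rw [hq]
    simp only [eval_prod, eval_sub, eval_X, eval_C]
    refine Finset.prod_congr rfl fun k _ => ?_
    push_cast
    ring
  have h4 : Matrix.det (Matrix.of fun i j : Fin n =>
        (q j).eval ((d + r * (i : ℕ) : ℕ) : ℚ))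
      = ∏ i : Fin n, ((r : ℚ) ^ (i : ℕ) * ((i : ℕ).factorial : ℚ)) := by
    have htri : (Matrix.of fun i j : Fin n =>
        (q j).eval ((d + r * (i : ℕ) : ℕ) : ℚ)).BlockTriangular OrderDual.toDual := by
      intro i j hij
      have hij' : (i : ℕ) < (j : ℕ) := hij
      rw [Matrix.of_apply, heval]
      exact Finset.prod_eq_zero (Finset.mem_range.mpr hij') (by simp)
    rw [Matrix.det_of_lowerTriangular _ htri]
    refine Finset.prod_congr rfl fun i _ => ?_
    rw [Matrix.of_apply, heval, Finset.prod_mul_distrib, Finset.prod_const,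
      Finset.card_range, prod_range_cast_sub]
  rw [h1, h2, h3, h4, ← Finset.prod_mul_distrib]
  have : ∀ i : Fin n, ((i : ℕ).factorial : ℚ)⁻¹ * ((r : ℚ) ^ (i : ℕ) * ((i : ℕ).factorial : ℚ))
      = (r : ℚ) ^ (i : ℕ) := by
    intro i
    field_simp
  rw [Finset.prod_congr rfl (fun i _ => this i), Finset.prod_pow_eq_pow_sum]
  congr 1
  rw [Fin.sum_univ_eq_sum_range (fun i => i) n, Finset.sum_range_id, Nat.choose_two_right]

lemma choose_entry_factor (a y j : ℕ) (h : y ≤ a) :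
    (a.choose (j + y) : ℚ) =
      (a.choose y : ℚ) * (((j + y).choose y : ℚ)⁻¹ * ((a - y).choose j : ℚ)) := by
  have hne : (((j + y).choose y : ℕ) : ℚ) ≠ 0 := by
    exact_mod_cast (Nat.choose_pos (Nat.le_add_left y j)).ne'
  have key : a.choose (j + y) * (j + y).choose y = a.choose y * (a - y).choose j := by
    by_cases hja : j + y ≤ a
    · have := Nat.choose_mul (n := a) (Nat.le_add_left y j)
      rwa [Nat.add_sub_cancel] at this
    · push_neg at hja
      rw [Nat.choose_eq_zero_of_lt hja, Nat.zero_mul,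
        Nat.choose_eq_zero_of_lt (show a - y < j by omega), Nat.mul_zero]
  field_simp
  exact_mod_cast key

theorem det_choose_ri_add_x_j_add_y (n r x y : ℕ) :
    Matrix.det (Matrix.of fun i j : Fin n =>
        ((r * (i : ℕ) + x).choose ((j : ℕ) + y) : ℚ)) =
      (r : ℚ) ^ n.choose 2 *
        ∏ i ∈ Finset.range n, ((r * i + x).choose y : ℚ) / ((i + y).choose y : ℚ) := by
  rcases Nat.eq_zero_or_pos n with hn | hn
  · subst hn
    simp
  by_cases hxy : y ≤ x
  · -- all rows valid
    have hentry : ∀ i j : Fin n, ((r * (i : ℕ) + x).choose ((j : ℕ) + y) : ℚ) =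
        ((r * (i : ℕ) + x).choose y : ℚ) *
          ((((j : ℕ) + y).choose y : ℚ)⁻¹ * (((x - y) + r * (i : ℕ)).choose (j : ℕ) : ℚ)) := by
      intro i j
      have h1 : y ≤ r * (i : ℕ) + x := by omega
      have h2 : r * (i : ℕ) + x - y = (x - y) + r * (i : ℕ) := by omega
      rw [choose_entry_factor _ _ _ h1, h2]
    calc Matrix.det (Matrix.of fun i j : Fin n =>
          ((r * (i : ℕ) + x).choose ((j : ℕ) + y) : ℚ))
        = Matrix.det (Matrix.of fun i j : Fin n =>
            ((r * (i : ℕ) + x).choose y : ℚ) *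
              ((((j : ℕ) + y).choose y : ℚ)⁻¹ *
                (((x - y) + r * (i : ℕ)).choose (j : ℕ) : ℚ))) := by
          congr 1; ext i j; exact hentry i j
      _ = (∏ i : Fin n, ((r * (i : ℕ) + x).choose y : ℚ)) *
            Matrix.det (Matrix.of fun i j : Fin n =>
              (((j : ℕ) + y).choose y : ℚ)⁻¹ *
                (((x - y) + r * (i : ℕ)).choose (j : ℕ) : ℚ)) :=
          Matrix.det_mul_column _ _
      _ = (∏ i : Fin n, ((r * (i : ℕ) + x).choose y : ℚ)) *
            ((∏ j : Fin n, (((j : ℕ) + y).choose y : ℚ)⁻¹) *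
              Matrix.det (Matrix.of fun i j : Fin n =>
                (((x - y) + r * (i : ℕ)).choose (j : ℕ) : ℚ))) := by
          exact congrArg _ (Matrix.det_mul_row (fun j : Fin n => (((j : ℕ) + y).choose y : ℚ)⁻¹)
            (Matrix.of fun i j : Fin n => (((x - y) + r * (i : ℕ)).choose (j : ℕ) : ℚ)))
      _ = (∏ i : Fin n, ((r * (i : ℕ) + x).choose y : ℚ)) *
            ((∏ j : Fin n, (((j : ℕ) + y).choose y : ℚ)⁻¹) * (r : ℚ) ^ n.choose 2) := by
          rw [det_choose_base]
      _ = (r : ℚ) ^ n.choose 2 *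
            ∏ i ∈ Finset.range n, ((r * i + x).choose y : ℚ) / ((i + y).choose y : ℚ) := by
          rw [Finset.prod_div_distrib]
          rw [← Fin.prod_univ_eq_prod_range (fun i => ((r * i + x).choose y : ℚ)) n,
            ← Fin.prod_univ_eq_prod_range (fun i => ((i + y).choose y : ℚ)) n]
          rw [div_eq_mul_inv, ← Finset.prod_inv_distrib]
          ring
  · -- row 0 is zero; RHS has zero factor
    push_neg at hxy
    have hrow : Matrix.det (Matrix.of fun i j : Fin n =>
        ((r * (i : ℕ) + x).choose ((j : ℕ) + y) : ℚ)) = 0 := by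
      apply Matrix.det_eq_zero_of_row_eq_zero ⟨0, hn⟩
      intro j
      simp only [Matrix.of_apply]
      norm_num
      exact Nat.choose_eq_zero_of_lt (by omega)
    rw [hrow]
    have : ∏ i ∈ Finset.range n, ((r * i + x).choose y : ℚ) / ((i + y).choose y : ℚ) = 0 := by
      apply Finset.prod_eq_zero (Finset.mem_range.mpr hn)
      rw [Nat.choose_eq_zero_of_lt (by omega)]
      simp
    rw [this, mul_zero]
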